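/- On the Riemannian product M = ℝ^k × S^{n-k} with the product metric g = (flat metric) + g_{S^{n-k}}, n ≥ 4, 2 ≤ k ≤ n-2, and potential f(x,θ) = |x|²/2, the pair (g, f) is a gradient shrinking Ricci soliton with harmonic Weyl tensor (indeed vanishing Cotton tensor), but the radial Weyl curvature W(∇f,·,·,·) does not vanish identically. -/

import Mathlib

/- STATEMENT 11: On ℝ^k × S^{n-k} (n ≥ 4, 2 ≤ k ≤ n-2) with the product metric of
the flat metric and the round sphere metric (normalized so the sphere has Ricci
curvature equal to the metric), and potential f(x,θ) = |x|²/2, the pair (g,f) is a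
gradient shrinking Ricci soliton (Ric + ∇²f = λ g with λ = 1 > 0) with vanishing
Cotton tensor (harmonic Weyl tensor), but the radial Weyl curvature W(∇f,·,·,·)
does not vanish identically.  Formulation in a global coordinate chart
ℝ^k × ℝ^{n-k} ⊆ ℝⁿ (stereographic coordinates on the sphere factor, in which the
round metric of radius √(n-k-1) is (n-k-1)·4/(1+|y|²)² δ); all curvature
quantities are defined from g via partial derivatives. -/

open scoped BigOperators

noncomputable section

abbrev Pt (m : ℕ) := EuclideanSpace ℝ (Fin m)

/-- Partial derivative of a scalar function. -/
def pd {m : ℕ} (f : Pt m → ℝ) (i : Fin m) (x : Pt m) : ℝ :=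
  fderiv ℝ f x (EuclideanSpace.single i 1)

/-- Inverse metric. -/
def ginv {m : ℕ} (g : Pt m → Fin m → Fin m → ℝ) (x : Pt m) : Fin m → Fin m → ℝ :=
  (show Matrix (Fin m) (Fin m) ℝ from g x)⁻¹

/-- Christoffel symbols Γ^k_{ij} of the Levi-Civita connection. -/
def Christoffel {m : ℕ} (g : Pt m → Fin m → Fin m → ℝ) (x : Pt m) (k i j : Fin m) : ℝ :=
  (1/2) * ∑ l, ginv g x k l *
    (pd (fun y => g y l j) i x + pd (fun y => g y l i) j x - pd (fun y => g y i j) l x)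

/-- (3,1)-Riemann curvature R^d_{abc}. -/
def RiemUp {m : ℕ} (g : Pt m → Fin m → Fin m → ℝ) (x : Pt m) (d a b c : Fin m) : ℝ :=
  pd (fun y => Christoffel g y d b c) a x - pd (fun y => Christoffel g y d a c) b x
    + ∑ e, Christoffel g x d a e * Christoffel g x e b c
    - ∑ e, Christoffel g x d b e * Christoffel g x e a c

/-- (4,0)-Riemann curvature R_{abcd}. -/
def Riem {m : ℕ} (g : Pt m → Fin m → Fin m → ℝ) (x : Pt m) (a b c d : Fin m) : ℝ :=
  ∑ e, g x d e * RiemUp g x e a b c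

/-- Ricci curvature. -/
def Ric {m : ℕ} (g : Pt m → Fin m → Fin m → ℝ) (x : Pt m) (b c : Fin m) : ℝ :=
  ∑ a, RiemUp g x a a b c

/-- Scalar curvature. -/
def Scal {m : ℕ} (g : Pt m → Fin m → Fin m → ℝ) (x : Pt m) : ℝ :=
  ∑ b, ∑ c, ginv g x b c * Ric g x b c

/-- Covariant Hessian ∇²f. -/
def Hess {m : ℕ} (g : Pt m → Fin m → Fin m → ℝ) (f : Pt m → ℝ) (x : Pt m)
    (i j : Fin m) : ℝ :=
  pd (fun y => pd f j y) i x - ∑ k, Christoffel g x k i j * pd f k x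

/-- Covariant derivative ∇_c R_{ab} of the Ricci tensor. -/
def CovDRic {m : ℕ} (g : Pt m → Fin m → Fin m → ℝ) (x : Pt m) (a b c : Fin m) : ℝ :=
  pd (fun y => Ric g y a b) c x - ∑ d, Christoffel g x d c a * Ric g x d b
    - ∑ d, Christoffel g x d c b * Ric g x a d

/-- Cotton tensor. -/
def Cotton {m : ℕ} (g : Pt m → Fin m → Fin m → ℝ) (x : Pt m) (a b c : Fin m) : ℝ :=
  CovDRic g x a b c - CovDRic g x a c b
    - (1/(2*((m:ℝ)-1))) * (pd (fun y => Scal g y) c x * g x a b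
        - pd (fun y => Scal g y) b x * g x a c)

/-- Weyl tensor. -/
def Weyl {m : ℕ} (g : Pt m → Fin m → Fin m → ℝ) (x : Pt m) (a b c d : Fin m) : ℝ :=
  Riem g x a b c d + Scal g x/(((m:ℝ)-1)*((m:ℝ)-2)) * (g x a c * g x b d - g x a d * g x b c)
    - (1/((m:ℝ)-2)) * (Ric g x a c * g x b d - Ric g x a d * g x b c
        + Ric g x b d * g x a c - Ric g x b c * g x a d)

/-- The gradient ∇^a f. -/
def gradUp {m : ℕ} (g : Pt m → Fin m → Fin m → ℝ) (f : Pt m → ℝ) (x : Pt m)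
    (a : Fin m) : ℝ :=
  ∑ b, ginv g x a b * pd f b x

/-- Projection to the fiber coordinates. -/
def tail {m : ℕ} (x : Pt (m+1)) : Pt m := WithLp.toLp 2 (fun i : Fin m => x i.succ)

/-- The warped product metric dt² + w(t)² g_N in coordinates (t, x²,…,xⁿ). -/
def warped {m : ℕ} (w : ℝ → ℝ) (gN : Pt m → Fin m → Fin m → ℝ) (x : Pt (m+1))
    (a b : Fin (m+1)) : ℝ :=
  if ha : a = 0 then (if b = 0 then (1:ℝ) else 0)
  else if hb : b = 0 then 0
  else (w (x 0))^2 * gN (tail x) (a.pred ha) (b.pred hb)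

/-- The product metric on ℝ^k × S^{n-k} in stereographic coordinates. -/
def prodMetric (n k : ℕ) (x : Pt n) (a b : Fin n) : ℝ :=
  if a = b then
    (if (a : ℕ) < k then 1
     else ((n:ℝ) - k - 1) * 4 /
       (1 + ∑ j ∈ Finset.univ.filter (fun j : Fin n => k ≤ (j:ℕ)), (x j)^2)^2)
  else 0

/-- The potential f(x, θ) = |x|²/2. -/
def potential (n k : ℕ) (x : Pt n) : ℝ :=
  (1/2) * ∑ j ∈ Finset.univ.filter (fun j : Fin n => (j:ℕ) < k), (x j)^2

namespace SolitonAux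

/-! ### pd calculus -/

lemma pd_congr {m : ℕ} {f g : Pt m → ℝ} (h : ∀ y, f y = g y) (i : Fin m) (x : Pt m) :
    pd f i x = pd g i x := by
  have : f = g := funext h
  rw [pd, pd, this]

lemma pd_const {m : ℕ} (r : ℝ) (i : Fin m) (x : Pt m) :
    pd (fun _ : Pt m => r) i x = 0 := by
  rw [pd, fderiv_fun_const]; rfl

lemma diff_coord {m : ℕ} (j : Fin m) (x : Pt m) :
    DifferentiableAt ℝ (fun y : Pt m => y j) x := by
  have : (fun y : Pt m => y j) = ⇑(EuclideanSpace.proj (𝕜 := ℝ) j) := by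
    funext y; rfl
  rw [this]
  exact (EuclideanSpace.proj (𝕜 := ℝ) j).differentiableAt

lemma pd_coord {m : ℕ} (j i : Fin m) (x : Pt m) :
    pd (fun y : Pt m => y j) i x = if j = i then 1 else 0 := by
  have h : (fun y : Pt m => y j) = ⇑(EuclideanSpace.proj (𝕜 := ℝ) j) := by
    funext y; rfl
  rw [pd, h, (EuclideanSpace.proj (𝕜 := ℝ) j).fderiv]
  simp [EuclideanSpace.proj, EuclideanSpace.single_apply]

lemma pd_add {m : ℕ} {f g : Pt m → ℝ} {x : Pt m} (hf : DifferentiableAt ℝ f x)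
    (hg : DifferentiableAt ℝ g x) (i : Fin m) :
    pd (fun y => f y + g y) i x = pd f i x + pd g i x := by
  rw [pd, pd, pd, fderiv_fun_add hf hg]; rfl

lemma pd_sub {m : ℕ} {f g : Pt m → ℝ} {x : Pt m} (hf : DifferentiableAt ℝ f x)
    (hg : DifferentiableAt ℝ g x) (i : Fin m) :
    pd (fun y => f y - g y) i x = pd f i x - pd g i x := by
  rw [pd, pd, pd, fderiv_fun_sub hf hg]; rfl

lemma pd_mul {m : ℕ} {f g : Pt m → ℝ} {x : Pt m} (hf : DifferentiableAt ℝ f x)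
    (hg : DifferentiableAt ℝ g x) (i : Fin m) :
    pd (fun y => f y * g y) i x = pd f i x * g x + f x * pd g i x := by
  rw [pd, pd, pd, fderiv_fun_mul hf hg]
  simp [ContinuousLinearMap.add_apply, ContinuousLinearMap.smul_apply, smul_eq_mul]
  ring

lemma pd_const_mul {m : ℕ} {f : Pt m → ℝ} {x : Pt m} (hf : DifferentiableAt ℝ f x)
    (r : ℝ) (i : Fin m) :
    pd (fun y => r * f y) i x = r * pd f i x := by
  rw [pd, pd, fderiv_const_mul hf r]; rfl

lemma pd_inv {m : ℕ} {f : Pt m → ℝ} {x : Pt m} (hf : DifferentiableAt ℝ f x)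
    (h0 : f x ≠ 0) (i : Fin m) :
    pd (fun y => (f y)⁻¹) i x = -pd f i x / (f x)^2 := by
  have h := ((hasFDerivAt_inv h0).comp x hf.hasFDerivAt)
  have h2 : HasFDerivAt (fun y => (f y)⁻¹)
      ((ContinuousLinearMap.smulRight (1 : ℝ →L[ℝ] ℝ) (-(f x ^ 2)⁻¹)).comp (fderiv ℝ f x)) x := h
  rw [pd, h2.fderiv, pd]
  simp [ContinuousLinearMap.comp_apply, ContinuousLinearMap.smulRight_apply]
  ring

lemma pd_div {m : ℕ} {f g : Pt m → ℝ} {x : Pt m} (hf : DifferentiableAt ℝ f x)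
    (hg : DifferentiableAt ℝ g x) (h0 : g x ≠ 0) (i : Fin m) :
    pd (fun y => f y / g y) i x
      = (pd f i x * g x - f x * pd g i x) / (g x)^2 := by
  have h1 : (fun y => f y / g y) = fun y => f y * (g y)⁻¹ := by
    funext y; rw [div_eq_mul_inv]
  rw [h1, pd_mul hf (hg.fun_inv h0), pd_inv hg h0]
  field_simp
  ring

lemma diffAt_div {m : ℕ} {f g : Pt m → ℝ} {x : Pt m} (hf : DifferentiableAt ℝ f x)
    (hg : DifferentiableAt ℝ g x) (h0 : g x ≠ 0) :
    DifferentiableAt ℝ (fun y => f y / g y) x := by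
  have h1 : (fun y => f y / g y) = fun y => f y * (g y)⁻¹ := funext fun y => div_eq_mul_inv _ _
  rw [h1]; exact hf.mul (hg.inv h0)

lemma pd_sum {m : ℕ} {ι : Type*} (s : Finset ι) (A : ι → Pt m → ℝ) {x : Pt m}
    (h : ∀ j ∈ s, DifferentiableAt ℝ (A j) x) (i : Fin m) :
    pd (fun y => ∑ j ∈ s, A j y) i x = ∑ j ∈ s, pd (A j) i x := by
  rw [pd, fderiv_fun_sum h]
  simp [pd, ContinuousLinearMap.sum_apply]

lemma pd_sq {m : ℕ} {f : Pt m → ℝ} {x : Pt m} (hf : DifferentiableAt ℝ f x) (i : Fin m) :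
    pd (fun y => (f y)^2) i x = 2 * f x * pd f i x := by
  have h1 : (fun y => (f y)^2) = fun y => f y * f y := by funext y; ring
  rw [h1, pd_mul hf hf]; ring

end SolitonAux
namespace SolitonAux

/-! ### basic functions -/

def δ {m : ℕ} (a b : Fin m) : ℝ := if a = b then 1 else 0

def χ {m : ℕ} (k : ℕ) (a : Fin m) : ℝ := if k ≤ (a : ℕ) then 1 else 0

def Sf (n k : ℕ) (x : Pt n) : ℝ :=
  ∑ j ∈ Finset.univ.filter (fun j : Fin n => k ≤ (j:ℕ)), (x j)^2

def uf (n k : ℕ) (x : Pt n) : ℝ := 1 + Sf n k x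

def cf (n k : ℕ) (x : Pt n) : ℝ := ((n:ℝ) - k - 1) * 4 / (uf n k x)^2

def φ (n k : ℕ) (m : Fin n) (x : Pt n) : ℝ :=
  if k ≤ (m:ℕ) then -4 * x m / uf n k x else 0

lemma δ_refl {m : ℕ} (a : Fin m) : δ a a = 1 := if_pos rfl

lemma δ_ne {m : ℕ} {a b : Fin m} (h : a ≠ b) : δ a b = 0 := if_neg h

lemma χ_idem {m : ℕ} (k : ℕ) (a : Fin m) : χ k a * χ k a = χ k a := by
  unfold χ; split <;> ring

lemma χ_φ {n k : ℕ} (m : Fin n) (x : Pt n) : χ k m * φ n k m x = φ n k m x := by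
  unfold χ φ; split <;> simp

lemma Sf_nonneg (n k : ℕ) (x : Pt n) : 0 ≤ Sf n k x :=
  Finset.sum_nonneg fun j _ => sq_nonneg _

lemma uf_pos (n k : ℕ) (x : Pt n) : 0 < uf n k x := by
  have := Sf_nonneg n k x; unfold uf; linarith

lemma uf_ne (n k : ℕ) (x : Pt n) : uf n k x ≠ 0 := (uf_pos n k x).ne'

lemma cf_pos {n k : ℕ} (hkn : k + 2 ≤ n) (x : Pt n) : 0 < cf n k x := by
  have h1 : (0:ℝ) < (n:ℝ) - k - 1 := by
    have : (k:ℝ) + 2 ≤ (n:ℝ) := by exact_mod_cast hkn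
    linarith
  have h2 := uf_pos n k x
  unfold cf
  positivity

lemma cf_ne {n k : ℕ} (hkn : k + 2 ≤ n) (x : Pt n) : cf n k x ≠ 0 := (cf_pos hkn x).ne'

/-! ### differentiability -/

lemma diff_Sf (n k : ℕ) (x : Pt n) : DifferentiableAt ℝ (Sf n k) x := by
  apply DifferentiableAt.fun_sum
  intro j _
  exact (diff_coord j x).pow 2

lemma diff_uf (n k : ℕ) (x : Pt n) : DifferentiableAt ℝ (uf n k) x :=
  (differentiableAt_const 1).add (diff_Sf n k x)

lemma diff_uf_sq (n k : ℕ) (x : Pt n) :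
    DifferentiableAt ℝ (fun y => (uf n k y)^2) x := (diff_uf n k x).pow 2

lemma diff_cf (n k : ℕ) (x : Pt n) : DifferentiableAt ℝ (cf n k) x := by
  have h : DifferentiableAt ℝ (fun y : Pt n => ((n:ℝ) - k - 1) * 4 / (uf n k y)^2) x :=
    diffAt_div (differentiableAt_const _) (diff_uf_sq n k x)
      (pow_ne_zero 2 (uf_ne n k x))
  exact h

lemma diff_φ (n k : ℕ) (m : Fin n) (x : Pt n) : DifferentiableAt ℝ (φ n k m) x := by
  have h2 : DifferentiableAt ℝ (fun y : Pt n => -4 * y m / uf n k y) x :=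
    diffAt_div ((diff_coord m x).const_mul (-4)) (diff_uf n k x) (uf_ne n k x)
  unfold φ
  split
  · exact h2
  · exact differentiableAt_const 0

/-! ### partial derivatives -/

lemma pd_Sf (n k : ℕ) (i : Fin n) (x : Pt n) :
    pd (Sf n k) i x = if k ≤ (i:ℕ) then 2 * x i else 0 := by
  have h1 : pd (Sf n k) i x
      = ∑ j ∈ Finset.univ.filter (fun j : Fin n => k ≤ (j:ℕ)), pd (fun y : Pt n => (y j)^2) i x := by
    exact pd_sum _ _ (fun j _ => (diff_coord j x).pow 2) i
  have h2 : ∀ j : Fin n, pd (fun y : Pt n => (y j)^2) i x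
      = 2 * x j * (if j = i then 1 else 0) := by
    intro j; rw [pd_sq (diff_coord j x), pd_coord]
  rw [h1, Finset.sum_congr rfl (fun j _ => h2 j)]
  by_cases hi : k ≤ (i:ℕ)
  · rw [Finset.sum_eq_single i]
    · simp [hi]
    · intro j _ hj; simp [hj]
    · intro h; simp [hi] at h
  · rw [Finset.sum_eq_zero, if_neg hi]
    intro j hj
    rcases eq_or_ne j i with rfl | h
    · simp at hj; exact absurd hj hi
    · simp [h]

lemma pd_uf (n k : ℕ) (i : Fin n) (x : Pt n) :
    pd (uf n k) i x = if k ≤ (i:ℕ) then 2 * x i else 0 := by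
  have : pd (uf n k) i x = pd (fun _ : Pt n => (1:ℝ)) i x + pd (Sf n k) i x :=
    pd_add (differentiableAt_const 1) (diff_Sf n k x) i
  rw [this, pd_const, pd_Sf, zero_add]

lemma pd_uf_phi (n k : ℕ) (i : Fin n) (x : Pt n) :
    pd (uf n k) i x = -(1/2) * (uf n k x * φ n k i x) := by
  rw [pd_uf]; unfold φ
  split
  · field_simp [uf_ne n k x]; ring
  · simp

lemma pd_cf (n k : ℕ) (i : Fin n) (x : Pt n) :
    pd (cf n k) i x = cf n k x * φ n k i x := by
  have h1 : pd (cf n k) i x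
      = (pd (fun _ : Pt n => ((n:ℝ) - k - 1) * 4) i x * (uf n k x)^2
          - ((n:ℝ) - k - 1) * 4 * pd (fun y => (uf n k y)^2) i x) / ((uf n k x)^2)^2 :=
    pd_div (differentiableAt_const _) (diff_uf_sq n k x) (pow_ne_zero 2 (uf_ne n k x)) i
  rw [h1, pd_const, pd_sq (diff_uf n k x), pd_uf_phi]
  unfold cf
  field_simp [uf_ne n k x]
  ring

lemma pd_φ (n k : ℕ) (m i : Fin n) (x : Pt n) :
    pd (φ n k m) i x
      = (-4 / uf n k x) * (χ k m * δ m i) + (1/2) * (φ n k m x * φ n k i x) := by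
  by_cases hm : k ≤ (m:ℕ)
  · have L : pd (φ n k m) i x = pd (fun y : Pt n => (-4 * y m) / uf n k y) i x :=
      pd_congr (fun y => by unfold φ; rw [if_pos hm]) i x
    have hc : pd (fun y : Pt n => -4 * y m) i x = -4 * (if m = i then 1 else 0) := by
      rw [pd_const_mul (diff_coord m x), pd_coord]
    rw [L, pd_div ((diff_coord m x).const_mul (-4)) (diff_uf n k x) (uf_ne n k x),
      hc, pd_uf_phi]
    have hφm : φ n k m x = -4 * x m / uf n k x := by unfold φ; rw [if_pos hm]
    have hχ : χ k m = 1 := if_pos hm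
    rw [hφm, hχ]
    unfold δ
    split
    · field_simp [uf_ne n k x]; ring
    · field_simp [uf_ne n k x]; ring
  · have L : pd (φ n k m) i x = pd (fun _ : Pt n => (0:ℝ)) i x :=
      pd_congr (fun y => by unfold φ; rw [if_neg hm]) i x
    have hχ : χ k m = 0 := if_neg hm
    have hφm : φ n k m x = 0 := by unfold φ; rw [if_neg hm]
    rw [L, pd_const, hχ, hφm]
    ring

end SolitonAux
namespace SolitonAux

/-! ### metric closed form -/

lemma g_eq (n k : ℕ) (x : Pt n) (a b : Fin n) :
    prodMetric n k x a b = if a = b then (if (a:ℕ) < k then 1 else cf n k x) else 0 := rfl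

lemma g_diag (n k : ℕ) (x : Pt n) {a b : Fin n} (h : a ≠ b) : prodMetric n k x a b = 0 := by
  rw [g_eq, if_neg h]

lemma diff_g (n k : ℕ) (a b : Fin n) (x : Pt n) :
    DifferentiableAt ℝ (fun y => prodMetric n k y a b) x := by
  have h : (fun y => prodMetric n k y a b)
      = fun y => if a = b then (if (a:ℕ) < k then 1 else cf n k y) else 0 := by
    funext y; exact g_eq n k y a b
  rw [h]
  split
  · split
    · exact differentiableAt_const 1
    · exact diff_cf n k x
  · exact differentiableAt_const 0

lemma pd_g (n k : ℕ) (a b i : Fin n) (x : Pt n) :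
    pd (fun y => prodMetric n k y a b) i x
      = if a = b then (if (a:ℕ) < k then 0 else cf n k x * φ n k i x) else 0 := by
  by_cases hab : a = b
  · by_cases ha : (a:ℕ) < k
    · have L : pd (fun y => prodMetric n k y a b) i x = pd (fun _ : Pt n => (1:ℝ)) i x :=
        pd_congr (fun y => by rw [g_eq, if_pos hab, if_pos ha]) i x
      rw [L, pd_const, if_pos hab, if_pos ha]
    · have L : pd (fun y => prodMetric n k y a b) i x = pd (cf n k) i x :=
        pd_congr (fun y => by rw [g_eq, if_pos hab, if_neg ha]) i x
      rw [L, pd_cf, if_pos hab, if_neg ha]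
  · have L : pd (fun y => prodMetric n k y a b) i x = pd (fun _ : Pt n => (0:ℝ)) i x :=
      pd_congr (fun y => by rw [g_eq, if_neg hab]) i x
    rw [L, pd_const, if_neg hab]

/-! ### inverse metric -/

lemma ginv_apply (n k : ℕ) (x : Pt n) (a b : Fin n) :
    ginv (prodMetric n k) x a b = (prodMetric n k x a b)⁻¹ := rfl

lemma ginv_eq (n k : ℕ) (x : Pt n) (a b : Fin n) :
    ginv (prodMetric n k) x a b
      = if a = b then (if (a:ℕ) < k then 1 else (cf n k x)⁻¹) else 0 := by
  rw [ginv_apply, g_eq]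
  split_ifs <;> simp

/-! ### Christoffel symbols -/

/-- Closed form of the Christoffel symbols. -/
def Γc (n k : ℕ) (x : Pt n) (d i j : Fin n) : ℝ :=
  (1/2) * χ k d * (δ d j * φ n k i x + δ d i * φ n k j x - δ i j * (χ k i * φ n k d x))

lemma Christoffel_eq {n k : ℕ} (hkn : k + 2 ≤ n) (x : Pt n) (d i j : Fin n) :
    Christoffel (prodMetric n k) x d i j = Γc n k x d i j := by
  unfold Christoffel
  rw [Finset.sum_eq_single d]
  · rw [ginv_eq, if_pos rfl, pd_g, pd_g, pd_g]
    rcases eq_or_ne d j with rfl | hdj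
    · rcases eq_or_ne d i with rfl | hdi
      · unfold Γc δ χ φ
        split_ifs
        all_goals try (exfalso; omega)
        all_goals try (exfalso; exact ‹_ ≠ _› ‹_ = _›)
        all_goals try (exfalso; exact ‹_ ≠ _› (Eq.symm ‹_ = _›))
        all_goals try ring
        all_goals (field_simp [cf_ne hkn x, uf_ne n k x] <;> ring)
      · unfold Γc δ χ φ
        split_ifs
        all_goals try (exfalso; omega)
        all_goals try (exfalso; exact ‹_ ≠ _› ‹_ = _›)
        all_goals try (exfalso; exact ‹_ ≠ _› (Eq.symm ‹_ = _›))
        all_goals try ring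
        all_goals (field_simp [cf_ne hkn x, uf_ne n k x] <;> ring)
    · rcases eq_or_ne d i with rfl | hdi
      · unfold Γc δ χ φ
        split_ifs
        all_goals try (exfalso; omega)
        all_goals try (exfalso; exact ‹_ ≠ _› ‹_ = _›)
        all_goals try (exfalso; exact ‹_ ≠ _› (Eq.symm ‹_ = _›))
        all_goals try ring
        all_goals (field_simp [cf_ne hkn x, uf_ne n k x] <;> ring)
      · rcases eq_or_ne i j with rfl | hij
        · unfold Γc δ χ φ
          split_ifs
          all_goals try (exfalso; omega)
          all_goals try (exfalso; exact ‹_ ≠ _› ‹_ = _›)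
          all_goals try (exfalso; exact ‹_ ≠ _› (Eq.symm ‹_ = _›))
          all_goals try ring
          all_goals (field_simp [cf_ne hkn x, uf_ne n k x] <;> ring)
        · unfold Γc δ χ φ
          split_ifs
          all_goals try (exfalso; omega)
          all_goals try (exfalso; exact ‹_ ≠ _› ‹_ = _›)
          all_goals try (exfalso; exact ‹_ ≠ _› (Eq.symm ‹_ = _›))
          all_goals try ring
          all_goals (field_simp [cf_ne hkn x, uf_ne n k x] <;> ring)
  · intro l _ hl
    rw [ginv_eq, if_neg (Ne.symm hl), zero_mul]
  · intro h; exact absurd (Finset.mem_univ d) h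

end SolitonAux
namespace SolitonAux

/-! ### sum helpers -/

lemma sum_delta_mul {n : ℕ} (c : Fin n) (f : Fin n → ℝ) :
    ∑ a, δ a c * f a = f c := by
  rw [Finset.sum_eq_single c]
  · rw [δ_refl, one_mul]
  · intro b _ hb; rw [δ_ne hb, zero_mul]
  · intro h; exact absurd (Finset.mem_univ c) h

lemma sum_delta_mul' {n : ℕ} (c : Fin n) (f : Fin n → ℝ) :
    ∑ a, δ c a * f a = f c := by
  rw [Finset.sum_eq_single c]
  · rw [δ_refl, one_mul]
  · intro b _ hb; rw [δ_ne (Ne.symm hb), zero_mul]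
  · intro h; exact absurd (Finset.mem_univ c) h

lemma card_fiber {n k : ℕ} (hkn : k + 2 ≤ n) :
    (Finset.univ.filter (fun j : Fin n => k ≤ (j:ℕ))).card = n - k := by
  have hk : k < n := by omega
  have h : Finset.univ.filter (fun j : Fin n => k ≤ (j:ℕ)) = Finset.Ici (⟨k, hk⟩ : Fin n) := by
    ext a
    simp [Fin.le_def]
  rw [h, Fin.card_Ici]

lemma sum_χ {n k : ℕ} (hkn : k + 2 ≤ n) :
    ∑ a : Fin n, χ k a = (n:ℝ) - k := by
  unfold χ
  rw [Finset.sum_boole, card_fiber hkn]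
  have : (k:ℝ) ≤ (n:ℝ) := by exact_mod_cast (by omega : k ≤ n)
  rw [Nat.cast_sub (by omega : k ≤ n)]

/-- Φ = ∑ φₑ². -/
def Φf (n k : ℕ) (x : Pt n) : ℝ := ∑ e, (φ n k e x)^2

lemma sum_φφ (n k : ℕ) (x : Pt n) :
    ∑ e, φ n k e x * φ n k e x = Φf n k x := by
  unfold Φf
  exact Finset.sum_congr rfl (fun e _ => (pow_two _).symm)

lemma Φf_eq (n k : ℕ) (x : Pt n) :
    Φf n k x = 16 * Sf n k x / (uf n k x)^2 := by
  unfold Φf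
  have h : ∀ e : Fin n, (φ n k e x)^2
      = if k ≤ (e:ℕ) then 16 * (x e)^2 / (uf n k x)^2 else 0 := by
    intro e
    unfold φ
    split
    · rw [div_pow]; congr 1; ring
    · exact zero_pow two_ne_zero
  rw [Finset.sum_congr rfl (fun e _ => h e), ← Finset.sum_filter]
  unfold Sf
  rw [Finset.mul_sum, Finset.sum_div]

/-! ### the G-lemmas -/

lemma sum_Γc_diag {n k : ℕ} (hkn : k + 2 ≤ n) (x : Pt n) (j : Fin n) :
    ∑ e, Γc n k x e e j = (((n:ℝ) - k)/2) * φ n k j x := by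
  have h : ∀ e, Γc n k x e e j = χ k e * ((1/2) * φ n k j x) := by
    intro e
    unfold Γc δ χ
    split_ifs
    all_goals try (exfalso; exact ‹_ ≠ _› rfl)
    all_goals ring
  rw [Finset.sum_congr rfl (fun e _ => h e), ← Finset.sum_mul, sum_χ hkn]
  ring

lemma sum_Γcφ {n k : ℕ} (x : Pt n) (d a : Fin n) :
    ∑ e, Γc n k x d a e * φ n k e x = (1/2) * δ d a * (χ k a * Φf n k x) := by
  have h : ∀ e, Γc n k x d a e * φ n k e x
      = δ d e * ((1/2) * χ k d * (φ n k a x * φ n k e x))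
        + δ d a * ((1/2) * χ k d * (φ n k e x * φ n k e x))
        - δ a e * ((1/2) * χ k d * (χ k a * (φ n k d x * φ n k e x))) := by
    intro e; unfold Γc; ring
  rw [Finset.sum_congr rfl (fun e _ => h e), Finset.sum_sub_distrib, Finset.sum_add_distrib,
    sum_delta_mul' d _, sum_delta_mul' a _]
  have h2 : ∑ e, δ d a * ((1/2) * χ k d * (φ n k e x * φ n k e x))
      = δ d a * ((1/2) * χ k d * Φf n k x) := by
    rw [← Finset.mul_sum]
    congr 1
    rw [← Finset.mul_sum, sum_φφ]
  rw [h2]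
  rcases eq_or_ne d a with rfl | hda
  · unfold δ χ φ
    split_ifs
    all_goals try (exfalso; exact ‹_ ≠ _› rfl)
    all_goals try (exfalso; omega)
    all_goals ring
  · rw [δ_ne hda]
    unfold χ φ
    split_ifs
    all_goals try (exfalso; omega)
    all_goals ring

lemma sum_ΓΓ {n k : ℕ} (x : Pt n) (d a b c : Fin n) :
    ∑ e, Γc n k x d a e * Γc n k x e b c
      = (1/2) * Γc n k x d a c * (χ k c * φ n k b x)
        + (1/2) * Γc n k x d a b * (χ k b * φ n k c x)
        - (1/4) * (δ b c * (δ d a * (χ k a * (χ k b * Φf n k x)))) := by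
  have key : ∀ (G : ℝ) (e : Fin n), G * Γc n k x e b c
      = δ e c * (G * ((1/2) * χ k e * φ n k b x))
        + δ e b * (G * ((1/2) * χ k e * φ n k c x))
        - δ b c * (χ k b * ((1/2) * (G * (χ k e * φ n k e x)))) := by
    intro G e; unfold Γc; ring
  rw [Finset.sum_congr rfl (fun e _ => key (Γc n k x d a e) e), Finset.sum_sub_distrib,
    Finset.sum_add_distrib, sum_delta_mul c _, sum_delta_mul b _]
  have h3 : ∑ e, δ b c * (χ k b * ((1/2) * (Γc n k x d a e * (χ k e * φ n k e x))))
      = δ b c * (χ k b * ((1/2) * ((1/2) * δ d a * (χ k a * Φf n k x)))) := by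
    rw [← Finset.mul_sum]
    congr 1
    rw [← Finset.mul_sum]
    congr 1
    rw [← Finset.mul_sum]
    congr 1
    rw [Finset.sum_congr rfl (fun e _ => by rw [χ_φ]), sum_Γcφ]
  rw [h3]
  ring

end SolitonAux
namespace SolitonAux

/-- The closed form of ∂φ. -/
def Pφ (n k : ℕ) (m i : Fin n) (x : Pt n) : ℝ :=
  (-4 / uf n k x) * (χ k m * δ m i) + (1/2) * (φ n k m x * φ n k i x)

lemma pd_φ' (n k : ℕ) (m i : Fin n) (x : Pt n) :
    pd (φ n k m) i x = Pφ n k m i x := pd_φ n k m i x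

lemma sum_χPφ {n k : ℕ} (hkn : k + 2 ≤ n) (x : Pt n) :
    ∑ a, χ k a * Pφ n k a a x
      = -4 * ((n:ℝ)-k) / uf n k x + (1/2) * Φf n k x := by
  have h : ∀ a, χ k a * Pφ n k a a x
      = χ k a * (-4 / uf n k x) + (1/2) * (φ n k a x * φ n k a x) := by
    intro a
    unfold Pφ
    rw [δ_refl]
    unfold χ φ
    split_ifs <;> ring
  rw [Finset.sum_congr rfl (fun a _ => h a), Finset.sum_add_distrib, ← Finset.sum_mul,
    sum_χ hkn, ← Finset.mul_sum, sum_φφ]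
  ring

lemma sum_Γcφ_up {n k : ℕ} (x : Pt n) (b c : Fin n) :
    ∑ a, Γc n k x a b c * φ n k a x
      = φ n k b x * φ n k c x - (1/2) * (δ b c * (χ k b * Φf n k x)) := by
  have h : ∀ a, Γc n k x a b c * φ n k a x
      = δ a c * ((1/2) * χ k a * (φ n k b x * φ n k a x))
        + δ a b * ((1/2) * χ k a * (φ n k c x * φ n k a x))
        - δ b c * (χ k b * ((1/2) * (χ k a * (φ n k a x * φ n k a x)))) := by
    intro a; unfold Γc; ring
  rw [Finset.sum_congr rfl (fun a _ => h a), Finset.sum_sub_distrib, Finset.sum_add_distrib,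
    sum_delta_mul c _, sum_delta_mul b _]
  have h3 : ∑ a, δ b c * (χ k b * ((1/2) * (χ k a * (φ n k a x * φ n k a x))))
      = δ b c * (χ k b * ((1/2) * Φf n k x)) := by
    rw [← Finset.mul_sum]
    congr 1
    rw [← Finset.mul_sum]
    congr 1
    rw [← Finset.mul_sum]
    congr 1
    rw [Finset.sum_congr rfl (fun a _ => by
      rw [show χ k a * (φ n k a x * φ n k a x) = (χ k a * φ n k a x) * φ n k a x by ring,
        χ_φ]), sum_φφ]
  rw [h3]
  unfold χ φ
  split_ifs
  all_goals try (exfalso; omega)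
  all_goals ring

lemma sum_Γba {n k : ℕ} (hkn : k + 2 ≤ n) (x : Pt n) (b : Fin n) :
    ∑ a, Γc n k x a b a * χ k a = (((n:ℝ)-k)/2) * φ n k b x := by
  have h : ∀ a, Γc n k x a b a * χ k a = χ k a * ((1/2) * φ n k b x) := by
    intro a
    unfold Γc δ χ φ
    split_ifs
    all_goals try (exfalso; exact ‹_ ≠ _› rfl)
    all_goals try (exfalso; exact ‹_ ≠ _› (Eq.symm ‹_ = _›))
    all_goals try (exfalso; exact ‹_ ≠ _› ‹_ = _›)
    all_goals try (exfalso; omega)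
    all_goals ring
  rw [Finset.sum_congr rfl (fun a _ => h a), ← Finset.sum_mul, sum_χ hkn]
  ring

lemma sum_δδχ {n k : ℕ} (b c : Fin n) :
    ∑ a : Fin n, δ a c * (δ a b * χ k a) = δ b c * χ k b := by
  rw [sum_delta_mul c _]
  rcases eq_or_ne b c with rfl | h
  · rw [δ_refl]
  · rw [δ_ne (Ne.symm h), δ_ne h, zero_mul, zero_mul]

/-! ### derivative of the Christoffel symbols -/

lemma diff_Γc (n k : ℕ) (d i j : Fin n) (x : Pt n) :
    DifferentiableAt ℝ (fun y => Γc n k y d i j) x := by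
  unfold Γc
  apply DifferentiableAt.const_mul
  exact (((diff_φ n k i x).const_mul _).add ((diff_φ n k j x).const_mul _)).sub
    (((diff_φ n k d x).const_mul _).const_mul _)

lemma pd_Γc (n k : ℕ) (d i j a : Fin n) (x : Pt n) :
    pd (fun y => Γc n k y d i j) a x
      = (1/2) * χ k d * (δ d j * Pφ n k i a x + δ d i * Pφ n k j a x
          - δ i j * (χ k i * Pφ n k d a x)) := by
  have h1 : pd (fun y => Γc n k y d i j) a x
      = (1/2) * χ k d * pd (fun y => δ d j * φ n k i y + δ d i * φ n k j y
          - δ i j * (χ k i * φ n k d y)) a x := by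
    exact pd_const_mul ((((diff_φ n k i x).const_mul _).add ((diff_φ n k j x).const_mul _)).sub
      (((diff_φ n k d x).const_mul _).const_mul _)) _ a
  rw [h1, pd_sub (((diff_φ n k i x).const_mul _).fun_add ((diff_φ n k j x).const_mul _))
      (((diff_φ n k d x).const_mul _).const_mul _),
    pd_add ((diff_φ n k i x).const_mul _) ((diff_φ n k j x).const_mul _),
    pd_const_mul (diff_φ n k i x), pd_const_mul (diff_φ n k j x),
    pd_const_mul ((diff_φ n k d x).const_mul _),
    pd_const_mul (diff_φ n k d x), pd_φ', pd_φ', pd_φ']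

lemma pd_Γ {n k : ℕ} (hkn : k + 2 ≤ n) (x : Pt n) (d i j a : Fin n) :
    pd (fun y => Christoffel (prodMetric n k) y d i j) a x
      = (1/2) * χ k d * (δ d j * Pφ n k i a x + δ d i * Pφ n k j a x
          - δ i j * (χ k i * Pφ n k d a x)) := by
  rw [pd_congr (fun y => Christoffel_eq hkn y d i j) a x, pd_Γc]

end SolitonAux
namespace SolitonAux

lemma ric_L1 {n k : ℕ} (hkn : k + 2 ≤ n) (x : Pt n) (b c : Fin n) :
    ∑ a, pd (fun y => Christoffel (prodMetric n k) y a b c) a x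
      = (1/2) * (χ k c * Pφ n k b c x) + (1/2) * (χ k b * Pφ n k c b x)
        - δ b c * (χ k b * ((1/2) * (-4 * ((n:ℝ)-k) / uf n k x + (1/2) * Φf n k x))) := by
  have h : ∀ a, pd (fun y => Christoffel (prodMetric n k) y a b c) a x
      = δ a c * ((1/2) * (χ k a * Pφ n k b a x))
        + δ a b * ((1/2) * (χ k a * Pφ n k c a x))
        - δ b c * (χ k b * ((1/2) * (χ k a * Pφ n k a a x))) := by
    intro a
    rw [pd_Γ hkn]
    ring
  rw [Finset.sum_congr rfl (fun a _ => h a), Finset.sum_sub_distrib, Finset.sum_add_distrib,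
    sum_delta_mul c _, sum_delta_mul b _]
  have h3 : ∑ a, δ b c * (χ k b * ((1/2) * (χ k a * Pφ n k a a x)))
      = δ b c * (χ k b * ((1/2) * (-4 * ((n:ℝ)-k) / uf n k x + (1/2) * Φf n k x))) := by
    rw [← Finset.mul_sum]
    congr 1
    rw [← Finset.mul_sum]
    congr 1
    rw [← Finset.mul_sum]
    congr 1
    exact sum_χPφ hkn x
  rw [h3]

lemma ric_L2 {n k : ℕ} (hkn : k + 2 ≤ n) (x : Pt n) (b c : Fin n) :
    ∑ a, pd (fun y => Christoffel (prodMetric n k) y a a c) b x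
      = ((n:ℝ)-k) * ((1/2) * Pφ n k c b x) := by
  have h : ∀ a, pd (fun y => Christoffel (prodMetric n k) y a a c) b x
      = χ k a * ((1/2) * Pφ n k c b x) := by
    intro a
    rw [pd_Γ hkn, δ_refl]
    unfold χ δ
    split_ifs
    all_goals try (exfalso; exact ‹_ ≠ _› rfl)
    all_goals ring
  rw [Finset.sum_congr rfl (fun a _ => h a), ← Finset.sum_mul, sum_χ hkn]

lemma ric_L3 {n k : ℕ} (hkn : k + 2 ≤ n) (x : Pt n) (b c : Fin n) :
    ∑ a, ∑ e, Christoffel (prodMetric n k) x a a e * Christoffel (prodMetric n k) x e b c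
      = ((((n:ℝ)-k)/2) * φ n k c x) * ((1/2) * (χ k c * φ n k b x))
        + ((((n:ℝ)-k)/2) * φ n k b x) * ((1/2) * (χ k b * φ n k c x))
        - ((n:ℝ)-k) * ((1/4) * (δ b c * (χ k b * Φf n k x))) := by
  have h : ∀ a, ∑ e, Christoffel (prodMetric n k) x a a e * Christoffel (prodMetric n k) x e b c
      = Γc n k x a a c * ((1/2) * (χ k c * φ n k b x))
        + Γc n k x a a b * ((1/2) * (χ k b * φ n k c x))
        - χ k a * ((1/4) * (δ b c * (χ k b * Φf n k x))) := by
    intro a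
    rw [Finset.sum_congr rfl (fun e _ => by rw [Christoffel_eq hkn, Christoffel_eq hkn]),
      sum_ΓΓ x a a b c, δ_refl]
    have hχ : χ k a * χ k b = χ k b * χ k a := mul_comm _ _
    ring
  rw [Finset.sum_congr rfl (fun a _ => h a), Finset.sum_sub_distrib, Finset.sum_add_distrib,
    ← Finset.sum_mul, ← Finset.sum_mul, ← Finset.sum_mul,
    sum_Γc_diag hkn x c, sum_Γc_diag hkn x b, sum_χ hkn]

lemma ric_L4 {n k : ℕ} (hkn : k + 2 ≤ n) (x : Pt n) (b c : Fin n) :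
    ∑ a, ∑ e, Christoffel (prodMetric n k) x a b e * Christoffel (prodMetric n k) x e a c
      = (φ n k b x * φ n k c x - (1/2) * (δ b c * (χ k b * Φf n k x))) * ((1/2) * χ k c)
        + ((((n:ℝ)-k)/2) * φ n k b x) * ((1/2) * φ n k c x)
        - (δ b c * χ k b) * ((1/4) * (χ k b * Φf n k x)) := by
  have h : ∀ a, ∑ e, Christoffel (prodMetric n k) x a b e * Christoffel (prodMetric n k) x e a c
      = (Γc n k x a b c * φ n k a x) * ((1/2) * χ k c)
        + (Γc n k x a b a * χ k a) * ((1/2) * φ n k c x)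
        - (δ a c * (δ a b * χ k a)) * ((1/4) * (χ k b * Φf n k x)) := by
    intro a
    rw [Finset.sum_congr rfl (fun e _ => by rw [Christoffel_eq hkn, Christoffel_eq hkn]),
      sum_ΓΓ x a b a c]
    have hχ : χ k a * (χ k a * Φf n k x) = χ k a * Φf n k x := by
      rw [← mul_assoc, χ_idem]
    have hχ2 : ∀ r : ℝ, χ k a * (χ k b * r) = χ k b * (χ k a * r) := by
      intro r; ring
    calc (1/2) * Γc n k x a b c * (χ k c * φ n k a x)
          + (1/2) * Γc n k x a b a * (χ k a * φ n k c x)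
          - (1/4) * (δ a c * (δ a b * (χ k b * (χ k a * Φf n k x))))
        = (1/2) * Γc n k x a b c * (χ k c * φ n k a x)
          + (1/2) * Γc n k x a b a * (χ k a * φ n k c x)
          - (1/4) * (δ a c * (δ a b * (χ k a * (χ k b * Φf n k x)))) := by
          rw [hχ2]
      _ = _ := by
          have hΓφ : Γc n k x a b c * (χ k c * φ n k a x)
              = (Γc n k x a b c * φ n k a x) * χ k c := by ring
          have hΓχ : Γc n k x a b a * (χ k a * φ n k c x)
              = (Γc n k x a b a * χ k a) * φ n k c x := by ring
          ring
  rw [Finset.sum_congr rfl (fun a _ => h a), Finset.sum_sub_distrib, Finset.sum_add_distrib,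
    ← Finset.sum_mul, ← Finset.sum_mul, ← Finset.sum_mul,
    sum_Γcφ_up x b c, sum_Γba hkn x b, sum_δδχ b c]

/-- The Ricci curvature of the product metric. -/
lemma Ric_eq {n k : ℕ} (hkn : k + 2 ≤ n) (x : Pt n) (b c : Fin n) :
    Ric (prodMetric n k) x b c = δ b c * (χ k b * cf n k x) := by
  have hsplit : Ric (prodMetric n k) x b c
      = (∑ a, pd (fun y => Christoffel (prodMetric n k) y a b c) a x)
        - (∑ a, pd (fun y => Christoffel (prodMetric n k) y a a c) b x)
        + (∑ a, ∑ e, Christoffel (prodMetric n k) x a a e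
            * Christoffel (prodMetric n k) x e b c)
        - (∑ a, ∑ e, Christoffel (prodMetric n k) x a b e
            * Christoffel (prodMetric n k) x e a c) := by
    unfold Ric RiemUp
    rw [Finset.sum_sub_distrib, Finset.sum_add_distrib, Finset.sum_sub_distrib]
  rw [hsplit, ric_L1 hkn, ric_L2 hkn, ric_L3 hkn, ric_L4 hkn, Φf_eq]
  have hu : (1:ℝ) + Sf n k x ≠ 0 := uf_ne n k x
  rcases eq_or_ne b c with rfl | hbc
  · rw [δ_refl]
    unfold Pφ δ χ φ cf uf
    split_ifs
    all_goals try (exfalso; exact ‹_ ≠ _› rfl)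
    all_goals try (exfalso; omega)
    all_goals (field_simp [hu] <;> ring)
  · rw [δ_ne hbc]
    unfold Pφ δ χ φ cf uf
    split_ifs
    all_goals try (exfalso; exact ‹_ ≠ _› ‹_ = _›)
    all_goals try (exfalso; omega)
    all_goals (field_simp [hu] <;> ring)

end SolitonAux
namespace SolitonAux

/-! ### scalar curvature -/

lemma Scal_eq {n k : ℕ} (hkn : k + 2 ≤ n) (x : Pt n) :
    Scal (prodMetric n k) x = (n:ℝ) - k := by
  unfold Scal
  have hinner : ∀ b : Fin n, ∑ c, ginv (prodMetric n k) x b c * Ric (prodMetric n k) x b c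
      = χ k b := by
    intro b
    rw [Finset.sum_eq_single b]
    · rw [ginv_eq, if_pos rfl, Ric_eq hkn, δ_refl]
      unfold χ
      split_ifs with h1 h2
      · exfalso; omega
      · ring
      · field_simp [cf_ne hkn x]
      · ring
    · intro c _ hc
      rw [ginv_eq, if_neg (Ne.symm hc), zero_mul]
    · intro h; exact absurd (Finset.mem_univ b) h
  rw [Finset.sum_congr rfl (fun b _ => hinner b), sum_χ hkn]

lemma pd_Scal {n k : ℕ} (hkn : k + 2 ≤ n) (c : Fin n) (x : Pt n) :
    pd (fun y => Scal (prodMetric n k) y) c x = 0 := by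
  rw [pd_congr (fun y => Scal_eq hkn y) c x, pd_const]

/-! ### potential and Hessian -/

lemma pd_potential (n k : ℕ) (i : Fin n) (x : Pt n) :
    pd (potential n k) i x = if (i:ℕ) < k then x i else 0 := by
  have hd : ∀ j : Fin n, DifferentiableAt ℝ (fun y : Pt n => (y j)^2) x :=
    fun j => (diff_coord j x).pow 2
  have h0 : pd (potential n k) i x
      = (1/2) * pd (fun y : Pt n =>
          ∑ j ∈ Finset.univ.filter (fun j : Fin n => (j:ℕ) < k), (y j)^2) i x := by
    exact pd_const_mul (DifferentiableAt.fun_sum (fun j _ => hd j)) _ i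
  rw [h0, pd_sum _ _ (fun j _ => hd j)]
  have h2 : ∀ j : Fin n, pd (fun y : Pt n => (y j)^2) i x
      = 2 * x j * (if j = i then 1 else 0) := by
    intro j; rw [pd_sq (diff_coord j x), pd_coord]
  rw [Finset.sum_congr rfl (fun j _ => h2 j)]
  by_cases hi : (i:ℕ) < k
  · rw [Finset.sum_eq_single i]
    · simp [hi]
    · intro j _ hj; simp [hj]
    · intro h; simp [hi] at h
  · rw [Finset.sum_eq_zero, if_neg hi]
    · ring
    · intro j hj
      rcases eq_or_ne j i with rfl | h
      · simp at hj; exact absurd hj hi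
      · simp [h]

lemma diff_potential (n k : ℕ) (x : Pt n) : DifferentiableAt ℝ (potential n k) x := by
  unfold potential
  exact (DifferentiableAt.fun_sum (fun j _ => (diff_coord j x).pow 2)).const_mul _

lemma pd_pd_potential (n k : ℕ) (j i : Fin n) (x : Pt n) :
    pd (fun y => pd (potential n k) j y) i x
      = if (j:ℕ) < k then (if j = i then 1 else 0) else 0 := by
  by_cases hj : (j:ℕ) < k
  · have L : pd (fun y => pd (potential n k) j y) i x = pd (fun y : Pt n => y j) i x :=
      pd_congr (fun y => by rw [pd_potential, if_pos hj]) i x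
    rw [L, pd_coord, if_pos hj]
  · have L : pd (fun y => pd (potential n k) j y) i x = pd (fun _ : Pt n => (0:ℝ)) i x :=
      pd_congr (fun y => by rw [pd_potential, if_neg hj]) i x
    rw [L, pd_const, if_neg hj]

lemma Hess_eq {n k : ℕ} (hkn : k + 2 ≤ n) (x : Pt n) (i j : Fin n) :
    Hess (prodMetric n k) (potential n k) x i j
      = if (j:ℕ) < k then (if j = i then 1 else 0) else 0 := by
  unfold Hess
  rw [pd_pd_potential]
  have hz : ∀ l : Fin n,
      Christoffel (prodMetric n k) x l i j * pd (potential n k) l x = 0 := by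
    intro l
    rw [Christoffel_eq hkn, pd_potential]
    by_cases hl : (l:ℕ) < k
    · rw [if_pos hl]
      have hχ : χ k l = 0 := if_neg (by omega)
      unfold Γc
      rw [hχ]
      ring
    · rw [if_neg hl, mul_zero]
  rw [Finset.sum_eq_zero (fun l _ => hz l), sub_zero]

/-- The soliton equation. -/
lemma soliton {n k : ℕ} (hkn : k + 2 ≤ n) (x : Pt n) (a b : Fin n) :
    Ric (prodMetric n k) x a b + Hess (prodMetric n k) (potential n k) x a b
      = prodMetric n k x a b := by
  rw [Ric_eq hkn, Hess_eq hkn, g_eq]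
  rcases eq_or_ne a b with rfl | hab
  · rw [δ_refl, if_pos rfl]
    unfold χ
    split_ifs
    all_goals try (exfalso; exact ‹_ ≠ _› rfl)
    all_goals try (exfalso; omega)
    all_goals ring
  · rw [δ_ne hab, if_neg hab]
    split_ifs with h1 h2
    · exact absurd h2.symm hab
    · ring
    · ring

/-! ### the Cotton tensor vanishes -/

lemma pd_Ric {n k : ℕ} (hkn : k + 2 ≤ n) (x : Pt n) (a b c : Fin n) :
    pd (fun y => Ric (prodMetric n k) y a b) c x
      = δ a b * (χ k a * (cf n k x * φ n k c x)) := by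
  have L : pd (fun y => Ric (prodMetric n k) y a b) c x
      = pd (fun y => δ a b * (χ k a * cf n k y)) c x :=
    pd_congr (fun y => by rw [Ric_eq hkn]) c x
  rw [L, pd_const_mul ((diff_cf n k x).const_mul _), pd_const_mul (diff_cf n k x), pd_cf]

lemma CovDRic_zero {n k : ℕ} (hkn : k + 2 ≤ n) (x : Pt n) (a b c : Fin n) :
    CovDRic (prodMetric n k) x a b c = 0 := by
  unfold CovDRic
  rw [pd_Ric hkn]
  have h1 : ∀ d : Fin n, Christoffel (prodMetric n k) x d c a * Ric (prodMetric n k) x d b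
      = δ d b * (Γc n k x d c a * (χ k d * cf n k x)) := by
    intro d; rw [Christoffel_eq hkn, Ric_eq hkn]; ring
  have h2 : ∀ d : Fin n, Christoffel (prodMetric n k) x d c b * Ric (prodMetric n k) x a d
      = δ d a * (Γc n k x d c b * (χ k d * cf n k x)) := by
    intro d; rw [Christoffel_eq hkn, Ric_eq hkn]
    rcases eq_or_ne a d with rfl | had
    · rw [δ_refl]; ring
    · rw [δ_ne had, δ_ne (Ne.symm had)]; ring
  rw [Finset.sum_congr rfl (fun d _ => h1 d), Finset.sum_congr rfl (fun d _ => h2 d),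
    sum_delta_mul b _, sum_delta_mul a _]
  rcases eq_or_ne a b with rfl | hab
  · rw [δ_refl]
    unfold Γc δ χ φ
    split_ifs
    all_goals try (exfalso; exact ‹_ ≠ _› rfl)
    all_goals try (exfalso; exact ‹_ ≠ _› ‹_ = _›)
    all_goals try (exfalso; exact ‹_ ≠ _› (Eq.symm ‹_ = _›))
    all_goals try (exfalso; omega)
    all_goals ring
  · rw [δ_ne hab]
    unfold Γc δ χ φ
    split_ifs
    all_goals try (exfalso; exact ‹_ ≠ _› rfl)
    all_goals try (exfalso; exact ‹_ ≠ _› ‹_ = _›)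
    all_goals try (exfalso; exact ‹_ ≠ _› (Eq.symm ‹_ = _›))
    all_goals try (exfalso; omega)
    all_goals ring

lemma Cotton_zero {n k : ℕ} (hkn : k + 2 ≤ n) (x : Pt n) (a b c : Fin n) :
    Cotton (prodMetric n k) x a b c = 0 := by
  unfold Cotton
  rw [CovDRic_zero hkn, CovDRic_zero hkn, pd_Scal hkn, pd_Scal hkn]
  ring

end SolitonAux
namespace SolitonAux

lemma weyl_witness {n k : ℕ} (hn : 4 ≤ n) (hk : 2 ≤ k) (hkn : k + 2 ≤ n) :
    ∃ (x : Pt n) (b c d : Fin n),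
      (∑ a, gradUp (prodMetric n k) (potential n k) x a
        * Weyl (prodMetric n k) x a b c d) ≠ 0 := by
  have h0n : 0 < n := by omega
  have h1n : 1 < n := by omega
  set i0 : Fin n := ⟨0, h0n⟩ with hi0def
  set i1 : Fin n := ⟨1, h1n⟩ with hi1def
  set p : Pt n := EuclideanSpace.single i0 (1:ℝ) with hpdef
  have hp : ∀ j : Fin n, p j = if j = i0 then 1 else 0 := fun j => by
    rw [hpdef, EuclideanSpace.single_apply]
  have hi01 : i0 ≠ i1 := by
    intro h
    have := congrArg Fin.val h
    simp [hi0def, hi1def] at this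
  have hi0k : (i0:ℕ) < k := by simp [hi0def]; omega
  have hi1k : (i1:ℕ) < k := by simp [hi1def]; omega
  have hχ0 : χ k i0 = 0 := if_neg (by omega)
  have hχ1 : χ k i1 = 0 := if_neg (by omega)
  -- values at p
  have hS : Sf n k p = 0 := by
    apply Finset.sum_eq_zero
    intro j hj
    rw [Finset.mem_filter] at hj
    have hj0 : j ≠ i0 := by
      intro h
      rw [h] at hj
      simp [hi0def] at hj
      omega
    rw [hp j, if_neg hj0]
    norm_num
  have hu : uf n k p = 1 := by unfold uf; rw [hS]; ring
  have hφ : ∀ m : Fin n, φ n k m p = 0 := by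
    intro m
    unfold φ
    split
    · have hm0 : m ≠ i0 := by
        intro h
        subst h
        simp [hi0def] at *
        omega
      rw [hp m, if_neg hm0]
      ring
    · rfl
  have hΓ : ∀ d i j : Fin n, Γc n k p d i j = 0 := by
    intro d i j
    unfold Γc
    rw [hφ, hφ, hφ]
    ring
  -- the Riemann term vanishes
  have hRiemUp : RiemUp (prodMetric n k) p i1 i0 i1 i0 = 0 := by
    unfold RiemUp
    rw [pd_Γ hkn, pd_Γ hkn, hχ1]
    rw [Finset.sum_eq_zero (fun e _ => by
      rw [Christoffel_eq hkn, hΓ, zero_mul] : ∀ e ∈ Finset.univ,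
        Christoffel (prodMetric n k) p i1 i0 e * Christoffel (prodMetric n k) p e i1 i0 = 0)]
    rw [Finset.sum_eq_zero (fun e _ => by
      rw [Christoffel_eq hkn, hΓ, zero_mul] : ∀ e ∈ Finset.univ,
        Christoffel (prodMetric n k) p i1 i1 e * Christoffel (prodMetric n k) p e i0 i0 = 0)]
    ring
  have hRiem : Riem (prodMetric n k) p i0 i1 i0 i1 = 0 := by
    unfold Riem
    apply Finset.sum_eq_zero
    intro e _
    rcases eq_or_ne e i1 with rfl | he
    · rw [hRiemUp, mul_zero]
    · rw [g_diag n k p (Ne.symm he), zero_mul]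
  -- metric and Ricci values
  have hg00 : prodMetric n k p i0 i0 = 1 := by rw [g_eq, if_pos rfl, if_pos hi0k]
  have hg11 : prodMetric n k p i1 i1 = 1 := by rw [g_eq, if_pos rfl, if_pos hi1k]
  have hg01 : prodMetric n k p i0 i1 = 0 := g_diag n k p hi01
  have hg10 : prodMetric n k p i1 i0 = 0 := g_diag n k p (Ne.symm hi01)
  have hr00 : Ric (prodMetric n k) p i0 i0 = 0 := by rw [Ric_eq hkn, hχ0]; ring
  have hr11 : Ric (prodMetric n k) p i1 i1 = 0 := by rw [Ric_eq hkn, hχ1]; ring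
  have hr01 : Ric (prodMetric n k) p i0 i1 = 0 := by rw [Ric_eq hkn, hχ0]; ring
  have hr10 : Ric (prodMetric n k) p i1 i0 = 0 := by rw [Ric_eq hkn, hχ1]; ring
  -- the Weyl component
  have hW : Weyl (prodMetric n k) p i0 i1 i0 i1
      = ((n:ℝ)-k) / (((n:ℝ)-1)*((n:ℝ)-2)) := by
    unfold Weyl
    rw [hRiem, Scal_eq hkn, hg00, hg11, hg01, hg10, hr00, hr11, hr01, hr10]
    ring
  -- the gradient
  have hpdf : ∀ b : Fin n, pd (potential n k) b p = δ b i0 := by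
    intro b
    rw [pd_potential]
    rcases eq_or_ne b i0 with rfl | hb
    · rw [if_pos hi0k, hp, if_pos rfl, δ_refl]
    · rw [δ_ne hb]
      split_ifs
      · rw [hp, if_neg hb]
      · rfl
  have hgrad : ∀ a : Fin n, gradUp (prodMetric n k) (potential n k) p a = δ a i0 := by
    intro a
    unfold gradUp
    rw [Finset.sum_congr rfl (fun b _ => by rw [hpdf b, mul_comm])]
    rw [sum_delta_mul i0 _, ginv_eq]
    rcases eq_or_ne a i0 with rfl | ha
    · rw [if_pos rfl, if_pos hi0k, δ_refl]
    · rw [if_neg ha, δ_ne ha]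
  refine ⟨p, i1, i0, i1, ?_⟩
  rw [Finset.sum_congr rfl (fun a _ => by rw [hgrad a]), sum_delta_mul i0 _, hW]
  have hnum : (0:ℝ) < (n:ℝ) - k := by
    have : (k:ℝ) + 2 ≤ (n:ℝ) := by exact_mod_cast hkn
    linarith
  have hd1 : (0:ℝ) < (n:ℝ) - 1 := by
    have : (4:ℝ) ≤ (n:ℝ) := by exact_mod_cast hn
    linarith
  have hd2 : (0:ℝ) < (n:ℝ) - 2 := by
    have : (4:ℝ) ≤ (n:ℝ) := by exact_mod_cast hn
    linarith
  exact ne_of_gt (div_pos hnum (mul_pos hd1 hd2))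

end SolitonAux

theorem product_soliton_harmonic_weyl_nonzero_radial_weyl
    (n k : ℕ) (hn : 4 ≤ n) (hk : 2 ≤ k) (hk' : k ≤ n - 2) :
    -- (g, f) is a gradient shrinking Ricci soliton: Ric + ∇²f = λ g with λ = 1 > 0
    ((∀ x a b, Ric (prodMetric n k) x a b + Hess (prodMetric n k) (potential n k) x a b
        = 1 * prodMetric n k x a b) ∧ (0:ℝ) < 1) ∧
      -- harmonic Weyl tensor: the Cotton tensor vanishes identically
      (∀ x a b c, Cotton (prodMetric n k) x a b c = 0) ∧
      -- but the radial Weyl curvature W(∇f,·,·,·) does not vanish identically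
      (∃ x b c d, (∑ a, gradUp (prodMetric n k) (potential n k) x a *
          Weyl (prodMetric n k) x a b c d) ≠ 0) := by
  have hkn : k + 2 ≤ n := by omega
  refine ⟨⟨fun x a b => ?_, one_pos⟩, fun x a b c => SolitonAux.Cotton_zero hkn x a b c,
    SolitonAux.weyl_witness hn hk hkn⟩
  rw [one_mul]
  exact SolitonAux.soliton hkn x a b


end
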